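/- (Lower feedback block with quantized input.) Let τ, μ > 0, m ∈ ℕ with m ≥ 1, ℓ₁, ℓ₂ > 0, ν̂₂ ≥ 0, ρ̂₂ ∈ ℝ, α̂ ∈ ℝ, k ∈ ℕ. Let V₂ : ℝⁿ → ℝ, x̂₂[k], x̂₂[k+1] ∈ ℝⁿ, and u₂, û₂, ŷ₂ ∈ ℝᵐ. Assume: (a) (1/τ)(V₂(x̂₂[k+1]) − V₂(x̂₂[k])) ≤ û₂ᵀŷ₂ − ν̂₂‖û₂‖₂² − ρ̂₂‖ŷ₂‖₂² + α̂/τ; (b) ‖û₂ − u₂‖₂ ≤ (√m)μ/2. Then (1/τ)(V₂(x̂₂[k+1]) − V₂(x̂₂[k])) ≤ u₂ᵀŷ₂ − ν̄₂‖u₂‖₂² − ρ̄₂‖ŷ₂‖₂² + ᾱ₂/τ, where ν̄₂ = ν̂₂(1 − 1/ℓ₂), ρ̄₂ = ρ̂₂ − 1/(4ℓ₁), and ᾱ₂ = α̂ + τ(mμ²/4)(ℓ₁ + ν̂₂(ℓ₂ + 1)). -/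

import Mathlib

set_option maxHeartbeats 1000000


open scoped RealInnerProductSpace

/-- Lower feedback block with quantized input: the quasi-passivity inequality in
terms of the quantized input `û₂` yields one in terms of the true input `u₂`,
with further degraded indices. -/
theorem stmt_14 {n m : ℕ} (τ μ : ℝ) (hτ : 0 < τ) (hμ : 0 < μ) (hm : 1 ≤ m)
    (ℓ₁ ℓ₂ : ℝ) (hℓ₁ : 0 < ℓ₁) (hℓ₂ : 0 < ℓ₂)
    (νhat₂ : ℝ) (hνhat₂ : 0 ≤ νhat₂) (ρhat₂ αhat : ℝ) (k : ℕ)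
    (V₂ : EuclideanSpace ℝ (Fin n) → ℝ) (xhat₂ xhat₂' : EuclideanSpace ℝ (Fin n))
    (u₂ uhat₂ yhat₂ : EuclideanSpace ℝ (Fin m))
    (hdiss : (1 / τ) * (V₂ xhat₂' - V₂ xhat₂) ≤
      ⟪uhat₂, yhat₂⟫ - νhat₂ * ‖uhat₂‖ ^ 2 - ρhat₂ * ‖yhat₂‖ ^ 2 + αhat / τ)
    (hq : ‖uhat₂ - u₂‖ ≤ Real.sqrt m * μ / 2) :
    (1 / τ) * (V₂ xhat₂' - V₂ xhat₂) ≤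
      ⟪u₂, yhat₂⟫ - (νhat₂ * (1 - 1 / ℓ₂)) * ‖u₂‖ ^ 2
        - (ρhat₂ - 1 / (4 * ℓ₁)) * ‖yhat₂‖ ^ 2
        + (αhat + τ * (m * μ ^ 2 / 4) * (ℓ₁ + νhat₂ * (ℓ₂ + 1))) / τ := by
  set e := uhat₂ - u₂ with he_def
  have hen : (0:ℝ) ≤ ‖e‖ := norm_nonneg _
  have hsq : Real.sqrt m ^ 2 = m := Real.sq_sqrt (Nat.cast_nonneg m)
  have he : ‖e‖ ^ 2 ≤ m * μ ^ 2 / 4 := by nlinarith [Real.sqrt_nonneg (m:ℝ)]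
  -- inner product bound
  have hip : ⟪uhat₂, yhat₂⟫ - ⟪u₂, yhat₂⟫ ≤ ℓ₁ * ‖e‖ ^ 2 + 1 / (4 * ℓ₁) * ‖yhat₂‖ ^ 2 := by
    have h1 : ⟪uhat₂, yhat₂⟫ - ⟪u₂, yhat₂⟫ = ⟪e, yhat₂⟫ := by
      rw [he_def, inner_sub_left]
    have h2 : ⟪e, yhat₂⟫ ≤ ‖e‖ * ‖yhat₂‖ := real_inner_le_norm e yhat₂
    have h3 : ‖e‖ * ‖yhat₂‖ - ℓ₁ * ‖e‖ ^ 2 ≤ 1 / (4 * ℓ₁) * ‖yhat₂‖ ^ 2 := by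
      rw [one_div, inv_mul_eq_div, le_div_iff₀ (by positivity)]
      nlinarith [sq_nonneg (2 * ℓ₁ * ‖e‖ - ‖yhat₂‖)]
    linarith [h1 ▸ h2]
  -- norm bound
  have htri : ‖u₂‖ ≤ ‖uhat₂‖ + ‖e‖ := by
    have : u₂ = uhat₂ - e := by rw [he_def]; abel
    rw [this]; exact norm_sub_le _ _
  have hnorm : (1 - 1 / ℓ₂) * ‖u₂‖ ^ 2 ≤ ‖uhat₂‖ ^ 2 + (ℓ₂ + 1) * ‖e‖ ^ 2 := by
    rcases le_or_gt ℓ₂ 1 with h | h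
    · have : (1 - 1 / ℓ₂) ≤ 0 := by
        have : 1 ≤ 1 / ℓ₂ := (one_le_div hℓ₂).mpr h
        linarith
      nlinarith [sq_nonneg ‖u₂‖, sq_nonneg ‖e‖, sq_nonneg ‖uhat₂‖]
    · have hu2 : ‖u₂‖ ^ 2 ≤ (‖uhat₂‖ + ‖e‖) ^ 2 := by
        nlinarith [norm_nonneg u₂]
      have hcoef : (0:ℝ) < 1 - 1 / ℓ₂ := by
        have : 1 / ℓ₂ < 1 := (div_lt_one hℓ₂).mpr h
        linarith
      have key : (1 - 1 / ℓ₂) * (‖uhat₂‖ + ‖e‖) ^ 2 ≤ ‖uhat₂‖ ^ 2 + (ℓ₂ + 1) * ‖e‖ ^ 2 := by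
        have hrw : (1 - 1 / ℓ₂) = (ℓ₂ - 1) / ℓ₂ := by field_simp
        rw [hrw, div_mul_eq_mul_div, div_le_iff₀ hℓ₂]
        nlinarith [sq_nonneg (‖uhat₂‖ - (ℓ₂ - 1) * ‖e‖), norm_nonneg uhat₂, hen]
      have := mul_le_mul_of_nonneg_left hu2 hcoef.le
      linarith
  have hτne : τ ≠ 0 := ne_of_gt hτ
  have hαs : (αhat + τ * (m * μ ^ 2 / 4) * (ℓ₁ + νhat₂ * (ℓ₂ + 1))) / τ
      = αhat / τ + (m * μ ^ 2 / 4) * (ℓ₁ + νhat₂ * (ℓ₂ + 1)) := by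
    field_simp
  have hν : νhat₂ * (1 - 1 / ℓ₂) * ‖u₂‖ ^ 2 - νhat₂ * ‖uhat₂‖ ^ 2
      ≤ νhat₂ * (ℓ₂ + 1) * ‖e‖ ^ 2 := by nlinarith [hnorm, hνhat₂]
  have hC : ℓ₁ * ‖e‖ ^ 2 + νhat₂ * (ℓ₂ + 1) * ‖e‖ ^ 2
      ≤ (m * μ ^ 2 / 4) * (ℓ₁ + νhat₂ * (ℓ₂ + 1)) := by
    have h1' : ℓ₁ * ‖e‖ ^ 2 ≤ ℓ₁ * (m * μ ^ 2 / 4) := mul_le_mul_of_nonneg_left he hℓ₁.le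
    have h2' : νhat₂ * (ℓ₂ + 1) * ‖e‖ ^ 2 ≤ νhat₂ * (ℓ₂ + 1) * (m * μ ^ 2 / 4) :=
      mul_le_mul_of_nonneg_left he (by positivity)
    nlinarith [h1', h2']
  rw [hαs]
  nlinarith [hdiss, hip, hν, hC, sq_nonneg ‖yhat₂‖, hℓ₁]
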